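/- For every prime element p of ℤ[i] with N(p) ≡ 1 (mod 8), there exist Gaussian integers x and y such that p = x² + i·y². -/

import Mathlib

open Zsqrtd

local notation "ι" => (⟨0, 1⟩ : GaussianInt)

namespace Stmt5Aux

lemma round_int (u M : ℤ) (hM : 0 < M) : ∃ q : ℤ, 2 * |u - q * M| ≤ M := by
  refine ⟨(2 * u + M) / (2 * M), ?_⟩
  have h0 := Int.mul_ediv_add_emod (2 * u + M) (2 * M)
  have h1 := Int.emod_nonneg (2 * u + M) (by positivity : (2 * M : ℤ) ≠ 0)
  have h2 := Int.emod_lt_of_pos (2 * u + M) (by positivity : (0 : ℤ) < 2 * M)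
  set q := (2 * u + M) / (2 * M)
  set r := (2 * u + M) % (2 * M)
  have key : 2 * (u - q * M) = r - M := by linarith
  rcases abs_cases (u - q * M) with ⟨h3, _⟩ | ⟨h3, _⟩ <;> omega

lemma norm_pos {m : GaussianInt} (hm : m ≠ 0) : 0 < m.norm := by
  rcases lt_or_eq_of_le (Zsqrtd.norm_nonneg (by norm_num) m) with h | h
  · exact h
  · exact absurd ((Zsqrtd.norm_eq_zero_iff (by norm_num) m).mp h.symm) hm

lemma gauss_round (x m : GaussianInt) (hm : m ≠ 0) :
    ∃ x' : GaussianInt, m ∣ x - x' ∧ 2 * x'.norm ≤ m.norm := by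
  have hM : 0 < m.norm := norm_pos hm
  set M := m.norm with hMdef
  obtain ⟨q1, hq1⟩ := round_int (x * star m).re M hM
  obtain ⟨q2, hq2⟩ := round_int (x * star m).im M hM
  refine ⟨x - ⟨q1, q2⟩ * m, ⟨⟨q1, q2⟩, by ring⟩, ?_⟩
  set x' := x - ⟨q1, q2⟩ * m with hx'
  have hmul : x' * star m = ⟨(x * star m).re - q1 * M, (x * star m).im - q2 * M⟩ := by
    have hMm : (M : GaussianInt) = m * star m := Zsqrtd.norm_eq_mul_conj m
    have : x' * star m = x * star m - ⟨q1, q2⟩ * (M : GaussianInt) := by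
      rw [hMm]; ring
    rw [this]
    ext <;> simp [Zsqrtd.re_mul, Zsqrtd.im_mul, Zsqrtd.re_intCast, Zsqrtd.im_intCast] <;> ring
  have hnormmul : x'.norm * M = (x' * star m).norm := by
    rw [Zsqrtd.norm_mul, Zsqrtd.norm_conj]
  have hcomp : (x' * star m).norm =
      ((x * star m).re - q1 * M) ^ 2 + ((x * star m).im - q2 * M) ^ 2 := by
    rw [hmul, Zsqrtd.norm_def]; ring
  have habs : 2 * ((( x * star m).re - q1 * M) ^ 2 + ((x * star m).im - q2 * M) ^ 2) ≤ M * M := by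
    nlinarith [sq_abs ((x * star m).re - q1 * M), sq_abs ((x * star m).im - q2 * M),
      abs_nonneg ((x * star m).re - q1 * M), abs_nonneg ((x * star m).im - q2 * M)]
  have : 2 * x'.norm * M ≤ M * M := by rw [mul_assoc, hnormmul, hcomp]; linarith
  exact le_of_mul_le_mul_right (by linarith) hM


lemma comp_identity (x y x' y' : GaussianInt) :
    (x ^ 2 + ι * y ^ 2) * (x' ^ 2 + ι * y' ^ 2) =
      (x * x' + ι * (y * y')) ^ 2 + ι * (y * x' - x * y') ^ 2 := by
  ext <;>
    simp only [pow_two, Zsqrtd.re_mul, Zsqrtd.im_mul, Zsqrtd.re_add, Zsqrtd.im_add,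
      Zsqrtd.re_sub, Zsqrtd.im_sub] <;> ring

lemma two_mul_sq_ne (e k : ℤ) (hk : k ≠ 0) : 2 * e ^ 2 ≠ k ^ 2 := by
  intro h
  have he : e ≠ 0 := by rintro rfl; simp at h; exact hk (by nlinarith)
  have hN : 2 * e.natAbs ^ 2 = k.natAbs ^ 2 := by
    have := congrArg Int.natAbs h
    simpa [Int.natAbs_mul, Int.natAbs_pow] using this
  have h1 : (2 * e.natAbs ^ 2).factorization 2 = (k.natAbs ^ 2).factorization 2 := by rw [hN]
  have he' : e.natAbs ≠ 0 := Int.natAbs_ne_zero.mpr he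
  rw [Nat.factorization_mul (by norm_num) (pow_ne_zero _ he'), Nat.factorization_pow,
    Nat.factorization_pow] at h1
  simp [Nat.Prime.factorization_self Nat.prime_two] at h1
  omega

set_option maxHeartbeats 1000000 in
lemma key_abstract (P Q R S s t M : ℤ) (hPQ : P ^ 2 + Q ^ 2 = s ^ 2)
    (hRS : R ^ 2 + S ^ 2 = t ^ 2) (hs0 : 0 ≤ s) (ht0 : 0 ≤ t)
    (h1 : 2 * s ≤ M) (h2 : 2 * t ≤ M) (hM : 2 ≤ M)
    (hc : M ^ 2 ≤ (P + R) ^ 2 + (Q + S) ^ 2) :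
    s = t ∧ M = 2 * s ∧ P = R ∧ Q = S := by
  have hlag : (P * R + Q * S) ^ 2 + (P * S - Q * R) ^ 2 = s ^ 2 * t ^ 2 := by
    linear_combination (R ^ 2 + S ^ 2) * hPQ + s ^ 2 * hRS
  have hcross : P * R + Q * S ≤ s * t := by
    nlinarith [sq_nonneg (P * S - Q * R), mul_nonneg hs0 ht0, sq_nonneg (P * R + Q * S + s * t)]
  have hup : (P + R) ^ 2 + (Q + S) ^ 2 ≤ (s + t) ^ 2 := by nlinarith [hcross, hPQ, hRS]
  have hstM : s + t ≤ M := by linarith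
  have hsq : (s + t) ^ 2 ≤ M ^ 2 := by
    have := mul_self_le_mul_self (by positivity : (0:ℤ) ≤ s + t) hstM
    nlinarith [this]
  have hsqeq : (s + t) ^ 2 = M ^ 2 := le_antisymm hsq (by linarith)
  have heq1 : s + t = M := by
    have hfac : (M - (s + t)) * (M + (s + t)) = 0 := by linear_combination -hsqeq
    rcases mul_eq_zero.mp hfac with h | h
    · linarith
    · linarith
  have hst : s = t := by omega
  have hMs : M = 2 * s := by omega
  have hNFeq : (P + R) ^ 2 + (Q + S) ^ 2 = (s + t) ^ 2 := le_antisymm hup (by linarith)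
  have h2cr : 2 * (P * R + Q * S) = 2 * (s * t) := by linear_combination hNFeq - hPQ - hRS
  have hcr : P * R + Q * S = s * t := by linarith
  rw [hcr] at hlag
  have h0 : (P * S - Q * R) ^ 2 = 0 := by linear_combination hlag
  have hz : (P - R) ^ 2 + (Q - S) ^ 2 = 0 := by
    linear_combination hPQ + hRS - 2 * hcr + (s - t) * hst
  refine ⟨hst, hMs, ?_, ?_⟩ <;> nlinarith [sq_nonneg (P - R), sq_nonneg (Q - S)]

set_option maxHeartbeats 1000000 in
lemma key_ineq (a b c d M : ℤ) (h1 : 2 * (a ^ 2 + b ^ 2) ≤ M) (h2 : 2 * (c ^ 2 + d ^ 2) ≤ M)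
    (hM : 2 ≤ M) :
    (a ^ 2 - b ^ 2 - 2 * c * d) ^ 2 + (2 * a * b + (c ^ 2 - d ^ 2)) ^ 2 < M ^ 2 := by
  by_contra hc
  push_neg at hc
  obtain ⟨hst, hMs, hA, hB⟩ := key_abstract (a ^ 2 - b ^ 2) (2 * a * b) (-(2 * c * d))
    (c ^ 2 - d ^ 2) (a ^ 2 + b ^ 2) (c ^ 2 + d ^ 2) M (by ring) (by ring) (by positivity)
    (by positivity) h1 h2 hM (by nlinarith [hc])
  have hef1 : (a * c + b * d) ^ 2 = (b * c - a * d) ^ 2 := by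
    linear_combination (c ^ 2 - d ^ 2) * hA + 2 * c * d * hB
  have hef2 : 2 * ((a * c + b * d) * (b * c - a * d)) = (c ^ 2 + d ^ 2) ^ 2 := by
    linear_combination (c ^ 2 - d ^ 2) * hB - 2 * c * d * hA
  set e := a * c + b * d with he
  set f := b * c - a * d with hf
  have htpos : 0 < c ^ 2 + d ^ 2 := by nlinarith
  have hcases : f = e ∨ f = -e := by
    have : (f - e) * (f + e) = 0 := by linear_combination -hef1
    rcases mul_eq_zero.mp this with h | h
    · left; linarith
    · right; linarith
  rcases hcases with hfe | hfe
  · exact two_mul_sq_ne e (c ^ 2 + d ^ 2) (by linarith) (by rw [hfe] at hef2; linarith)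
  · rw [hfe] at hef2; nlinarith [sq_nonneg e]

lemma sq_add_i_sq_eq_zero (a b c d : ℤ)
    (h1 : a ^ 2 - b ^ 2 - 2 * c * d = 0) (h2 : 2 * a * b + (c ^ 2 - d ^ 2) = 0) :
    a = 0 ∧ b = 0 ∧ c = 0 ∧ d = 0 := by
  have hA : a ^ 2 - b ^ 2 = 2 * c * d := by linarith
  have hB : 2 * a * b = d ^ 2 - c ^ 2 := by linarith
  have hef1 : (a * c + b * d) ^ 2 = (b * c - a * d) ^ 2 := by
    linear_combination (c ^ 2 - d ^ 2) * hA + 2 * c * d * hB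
  have hef2 : 2 * ((a * c + b * d) * (b * c - a * d)) = -(c ^ 2 + d ^ 2) ^ 2 := by
    linear_combination (c ^ 2 - d ^ 2) * hB - 2 * c * d * hA
  set e := a * c + b * d with he
  set f := b * c - a * d with hf
  have ht : c ^ 2 + d ^ 2 = 0 := by
    by_contra hcd
    have htpos : 0 < c ^ 2 + d ^ 2 :=
      lt_of_le_of_ne (by positivity) (Ne.symm hcd)
    have hcases : f = e ∨ f = -e := by
      have : (f - e) * (f + e) = 0 := by linear_combination -hef1
      rcases mul_eq_zero.mp this with h | h
      · left; linarith
      · right; linarith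
    rcases hcases with hfe | hfe
    · rw [hfe] at hef2; nlinarith [sq_nonneg e]
    · rw [hfe] at hef2
      exact two_mul_sq_ne e (c ^ 2 + d ^ 2) (by linarith) (by linarith)
  have hc0 : c = 0 := by nlinarith
  have hd0 : d = 0 := by nlinarith
  subst hc0; subst hd0
  have hab : a * b = 0 := by linarith
  have haabb : a ^ 2 = b ^ 2 := by linarith
  rcases mul_eq_zero.mp hab with h | h
  · have : b = 0 := by nlinarith
    exact ⟨h, this, rfl, rfl⟩
  · have : a = 0 := by nlinarith
    exact ⟨this, h, rfl, rfl⟩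


lemma norm_comp (z : GaussianInt) : z.norm = z.re ^ 2 + z.im ^ 2 := by
  rw [Zsqrtd.norm_def]; ring

lemma F_re (u v : GaussianInt) :
    (u ^ 2 + ι * v ^ 2).re = u.re ^ 2 - u.im ^ 2 - 2 * (v.re * v.im) := by
  simp only [pow_two, Zsqrtd.re_add, Zsqrtd.re_mul, Zsqrtd.im_mul]
  ring

lemma F_im (u v : GaussianInt) :
    (u ^ 2 + ι * v ^ 2).im = 2 * (u.re * u.im) + (v.re ^ 2 - v.im ^ 2) := by
  simp only [pow_two, Zsqrtd.im_add, Zsqrtd.re_mul, Zsqrtd.im_mul]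
  ring

lemma mul_i {w : GaussianInt} : (∃ a b : GaussianInt, w = a ^ 2 + ι * b ^ 2) →
    ∃ a b : GaussianInt, ι * w = a ^ 2 + ι * b ^ 2 := by
  rintro ⟨a, b, rfl⟩
  exact ⟨ι * b, a, by ext <;> simp only [pow_two, Zsqrtd.re_mul, Zsqrtd.im_mul,
    Zsqrtd.re_add, Zsqrtd.im_add] <;> ring⟩

lemma unit_cases (m : GaussianInt) (h : IsUnit m) : m = 1 ∨ m = -1 ∨ m = ι ∨ m = -ι := by
  have h1 : m.norm = 1 := (Zsqrtd.norm_eq_one_iff' (by norm_num) m).mpr h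
  rw [norm_comp] at h1
  have hre1 : m.re ≤ 1 := by nlinarith [sq_nonneg m.im]
  have hre2 : -1 ≤ m.re := by nlinarith [sq_nonneg m.im]
  have him1 : m.im ≤ 1 := by nlinarith [sq_nonneg m.re]
  have him2 : -1 ≤ m.im := by nlinarith [sq_nonneg m.re]
  obtain ⟨a, b⟩ := m
  simp only at hre1 hre2 him1 him2 h1 ⊢
  have : (a = 1 ∧ b = 0) ∨ (a = -1 ∧ b = 0) ∨ (a = 0 ∧ b = 1) ∨ (a = 0 ∧ b = -1) := by
    interval_cases a <;> interval_cases b <;> omega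
  rcases this with ⟨rfl, rfl⟩ | ⟨rfl, rfl⟩ | ⟨rfl, rfl⟩ | ⟨rfl, rfl⟩
  · left; rfl
  · right; left; rfl
  · right; right; left; rfl
  · right; right; right; rfl


lemma descent (p : GaussianInt) (hp : Prime p) :
    ∀ n : ℕ, ∀ m x y : GaussianInt, m.norm.natAbs = n → m ≠ 0 → m.norm < p.norm →
      p * m = x ^ 2 + ι * y ^ 2 → ∃ a b : GaussianInt, p = a ^ 2 + ι * b ^ 2 := by
  intro n
  induction n using Nat.strong_induction_on with
  | _ n ih =>
  intro m x y hn hm0 hmp heq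
  by_cases hmu : IsUnit m
  · have hS : ∃ a b : GaussianInt, p * m = a ^ 2 + ι * b ^ 2 := ⟨x, y, heq⟩
    rcases unit_cases m hmu with rfl | rfl | rfl | rfl
    · exact ⟨x, y, by rwa [mul_one] at heq⟩
    · obtain ⟨a, b, hab⟩ := mul_i (mul_i hS)
      refine ⟨a, b, ?_⟩
      rw [← hab]
      ext <;> simp only [Zsqrtd.re_mul, Zsqrtd.im_mul, Zsqrtd.re_neg, Zsqrtd.im_neg,
        Zsqrtd.re_one, Zsqrtd.im_one] <;> ring
    · obtain ⟨a, b, hab⟩ := mul_i (mul_i (mul_i hS))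
      refine ⟨a, b, ?_⟩
      rw [← hab]
      ext <;> simp only [Zsqrtd.re_mul, Zsqrtd.im_mul] <;> ring
    · obtain ⟨a, b, hab⟩ := mul_i hS
      refine ⟨a, b, ?_⟩
      rw [← hab]
      ext <;> simp only [Zsqrtd.re_mul, Zsqrtd.im_mul, Zsqrtd.re_neg, Zsqrtd.im_neg] <;> ring
  · -- m is not a unit
    have hMnn : 0 < m.norm := norm_pos hm0
    have hM2 : 2 ≤ m.norm := by
      rcases lt_or_ge m.norm 2 with h | h
      · exfalso
        have : m.norm = 1 := by omega
        exact hmu ((Zsqrtd.norm_eq_one_iff' (by norm_num) m).mp this)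
      · exact h
    obtain ⟨x', hx'd, hx'n⟩ := gauss_round x m hm0
    obtain ⟨y', hy'd, hy'n⟩ := gauss_round y m hm0
    have hdx : m ∣ x ^ 2 - x' ^ 2 := by
      obtain ⟨u, hu⟩ := hx'd
      exact ⟨u * (x + x'), by linear_combination (x + x') * hu⟩
    have hdy : m ∣ ι * (y ^ 2 - y' ^ 2) := by
      obtain ⟨u, hu⟩ := hy'd
      exact ⟨ι * (u * (y + y')), by linear_combination ι * (y + y') * hu⟩
    have hdvdF : m ∣ x' ^ 2 + ι * y' ^ 2 := by
      have hrepr : x' ^ 2 + ι * y' ^ 2 = p * m - (x ^ 2 - x' ^ 2) - ι * (y ^ 2 - y' ^ 2) := by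
        rw [heq]; ring
      rw [hrepr]
      exact dvd_sub (dvd_sub (dvd_mul_left m p) hdx) hdy
    obtain ⟨r, hr⟩ := hdvdF
    have hr0 : r ≠ 0 := by
      rintro rfl
      rw [mul_zero] at hr
      obtain ⟨ha, hb, hc, hd⟩ := sq_add_i_sq_eq_zero x'.re x'.im y'.re y'.im
        (by have := congrArg Zsqrtd.re hr; rw [F_re] at this
            simp only [Zsqrtd.re_zero] at this; linarith)
        (by have := congrArg Zsqrtd.im hr; rw [F_im] at this
            simp only [Zsqrtd.im_zero] at this; linarith)
      have hx'0 : x' = 0 := by ext <;> simp [ha, hb]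
      have hy'0 : y' = 0 := by ext <;> simp [hc, hd]
      rw [hx'0, sub_zero] at hx'd
      rw [hy'0, sub_zero] at hy'd
      obtain ⟨u, hu⟩ := hx'd
      obtain ⟨v, hv⟩ := hy'd
      have hpm : p = m * (u ^ 2 + ι * v ^ 2) := by
        apply mul_right_cancel₀ hm0
        rw [heq, hu, hv]; ring
      rcases hp.irreducible.isUnit_or_isUnit hpm with h | h
      · exact hmu h
      · have h1 : (u ^ 2 + ι * v ^ 2).norm = 1 :=
          (Zsqrtd.norm_eq_one_iff' (by norm_num) _).mpr h
        have : p.norm = m.norm := by rw [hpm, Zsqrtd.norm_mul, h1, mul_one]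
        omega
    have hFnorm : (x' ^ 2 + ι * y' ^ 2).norm < m.norm ^ 2 := by
      have hcomp : (x' ^ 2 + ι * y' ^ 2).norm =
          (x'.re ^ 2 - x'.im ^ 2 - 2 * y'.re * y'.im) ^ 2
            + (2 * x'.re * x'.im + (y'.re ^ 2 - y'.im ^ 2)) ^ 2 := by
        rw [norm_comp, F_re, F_im]; ring
      rw [hcomp]
      refine key_ineq _ _ _ _ _ ?_ ?_ hM2
      · rw [norm_comp] at hx'n; linarith
      · rw [norm_comp] at hy'n; linarith
    have hnr : r.norm < m.norm := by
      have h1 : m.norm * r.norm < m.norm * m.norm := by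
        rw [← Zsqrtd.norm_mul, ← hr]; nlinarith [hFnorm]
      exact lt_of_mul_lt_mul_left h1 (le_of_lt hMnn)
    have hX : m ∣ x * x' + ι * (y * y') := by
      have hrepr : x * x' + ι * (y * y') =
          (x' ^ 2 + ι * y' ^ 2) + x' * (x - x') + ι * y' * (y - y') := by ring
      rw [hrepr]
      exact dvd_add (dvd_add ⟨r, hr⟩ (Dvd.dvd.mul_left hx'd x')) (Dvd.dvd.mul_left hy'd (ι * y'))
    have hY : m ∣ y * x' - x * y' := by
      have hrepr : y * x' - x * y' = x' * (y - y') - y' * (x - x') := by ring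
      rw [hrepr]
      exact dvd_sub (Dvd.dvd.mul_left hy'd x') (Dvd.dvd.mul_left hx'd y')
    obtain ⟨X', hX'⟩ := hX
    obtain ⟨Y', hY'⟩ := hY
    have hcancel : p * r = X' ^ 2 + ι * Y' ^ 2 := by
      have hmm : (m * m : GaussianInt) ≠ 0 := mul_ne_zero hm0 hm0
      apply mul_left_cancel₀ hmm
      have hbig : (p * m) * (m * r) = (m * X') ^ 2 + ι * (m * Y') ^ 2 := by
        rw [heq, ← hr, comp_identity, hX', hY']
      linear_combination hbig
    refine ih r.norm.natAbs ?_ r X' Y' rfl hr0 (lt_trans hnr hmp) hcancel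
    rw [← hn]
    exact Int.natAbs_lt_natAbs_of_nonneg_of_lt (Zsqrtd.norm_nonneg (by norm_num) r) hnr


lemma exists_prime_nat_dvd (p : GaussianInt) (hp : Prime p) :
    ∀ n : ℕ, 2 ≤ n → p ∣ (n : GaussianInt) → ∃ q : ℕ, q.Prime ∧ p ∣ (q : GaussianInt) := by
  intro n
  induction n using Nat.strong_induction_on with
  | _ n ih =>
  intro hn2 hdvd
  have hn1 : n ≠ 1 := by omega
  have hq : n.minFac.Prime := Nat.minFac_prime hn1
  have hfac : n = n.minFac * (n / n.minFac) := (Nat.mul_div_cancel' n.minFac_dvd).symm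
  have hcast : (n : GaussianInt) = (n.minFac : GaussianInt) * ((n / n.minFac : ℕ) : GaussianInt) := by
    rw [← Nat.cast_mul, ← hfac]
  rcases hp.2.2 _ _ (hcast ▸ hdvd) with h | h
  · exact ⟨n.minFac, hq, h⟩
  · set k := n / n.minFac with hk
    have hk0 : k ≠ 0 := by
      intro h0
      rw [h0, Nat.mul_zero] at hfac; omega
    rcases Nat.lt_or_ge k 2 with hk2 | hk2
    · interval_cases k
      · omega
      · exfalso
        rw [Nat.cast_one] at h
        exact hp.not_unit (isUnit_of_dvd_one h)
    · have hklt : k < n := by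
        have h2 : 2 ≤ n.minFac := hq.two_le
        calc k < 2 * k := by omega
        _ ≤ n.minFac * k := by exact Nat.mul_le_mul_right k h2
        _ = n := hfac.symm
      exact ih k hklt hk2 h

lemma exists_sq (p : GaussianInt) (hp : Prime p) (h9 : 9 ≤ p.norm) (h8 : p.norm % 8 = 1) :
    ∃ z : GaussianInt, p ∣ z ^ 2 + ι := by
  have hnn : 0 ≤ p.norm := Zsqrtd.norm_nonneg (by norm_num) p
  set n := p.norm.natAbs with hndef
  have hncast : (n : ℤ) = p.norm := Int.natAbs_of_nonneg hnn
  have hn9 : 9 ≤ n := by omega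
  have hn8 : n % 8 = 1 := by omega
  have hpdvdn : p ∣ (n : GaussianInt) := by
    have : ((n : ℤ) : GaussianInt) = p * star p := by
      rw [hncast]; exact Zsqrtd.norm_eq_mul_conj p
    have h2 : (n : GaussianInt) = p * star p := by exact_mod_cast this
    exact Dvd.intro _ h2.symm
  obtain ⟨q, hq, hpq⟩ := exists_prime_nat_dvd p hp n (by omega) hpdvdn
  obtain ⟨w, hw⟩ := hpq
  have hnormq : (q : ℤ) * q = p.norm * w.norm := by
    have := congrArg Zsqrtd.norm hw
    rwa [Zsqrtd.norm_natCast, Zsqrtd.norm_mul] at this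
  have hq2 : q ≠ 2 := by
    rintro rfl
    have hdvd4 : p.norm ∣ 4 := ⟨w.norm, by push_cast at hnormq ⊢; linarith⟩
    have := Int.le_of_dvd (by norm_num) hdvd4
    omega
  have hqodd : q % 2 = 1 := Nat.odd_iff.mp (hq.odd_of_ne_two hq2)
  haveI : Fact q.Prime := ⟨hq⟩
  have hq0 : (q : ℤ) ≠ 0 := by exact_mod_cast hq.ne_zero
  rcases (by omega : q % 8 = 1 ∨ q % 8 = 3 ∨ q % 8 = 5 ∨ q % 8 = 7) with h | h | h | h
  · -- q % 8 = 1 : 2 is a square mod q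
    have h2sq : IsSquare (2 : ZMod q) := (ZMod.exists_sq_eq_two_iff hq2).mpr (Or.inl h)
    obtain ⟨c, hc⟩ := h2sq
    have hc0 : c ≠ 0 := by
      rintro rfl
      rw [mul_zero] at hc
      have h20 : ((2 : ℕ) : ZMod q) = 0 := by exact_mod_cast hc
      have := (ZMod.natCast_eq_zero_iff 2 q).mp h20
      have := Nat.le_of_dvd (by norm_num) this
      have := hq.two_le
      omega
    have hαeq : 2 * ((c⁻¹ : ZMod q)) ^ 2 = 1 := by
      rw [hc]; field_simp
    set A : ℤ := (((c⁻¹ : ZMod q)).val : ℤ) with hA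
    have hcastA : ((A : ℤ) : ZMod q) = c⁻¹ := by
      rw [hA]; push_cast; exact ZMod.natCast_zmod_val _
    have hkey : (q : ℤ) ∣ 2 * A ^ 2 - 1 := by
      rw [← ZMod.intCast_zmod_eq_zero_iff_dvd]
      push_cast
      rw [hcastA, hαeq]
      ring
    refine ⟨(A : GaussianInt) * ⟨1, -1⟩, ?_⟩
    have hfact : ((A : GaussianInt) * ⟨1, -1⟩) ^ 2 + ι =
        ((2 * A ^ 2 - 1 : ℤ) : GaussianInt) * ⟨0, -1⟩ := by
      ext <;> simp only [pow_two, Zsqrtd.re_mul, Zsqrtd.im_mul, Zsqrtd.re_add, Zsqrtd.im_add,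
        Zsqrtd.re_intCast, Zsqrtd.im_intCast] <;> push_cast <;> ring
    rw [hfact]
    have hq1 : p ∣ ((q : ℤ) : GaussianInt) := by
      have hpq' : p ∣ ((q : ℕ) : GaussianInt) := ⟨w, hw⟩
      exact_mod_cast hpq'
    exact dvd_mul_of_dvd_left (dvd_trans hq1 (Int.cast_dvd_cast _ _ hkey)) _
  · -- q % 8 = 3 : -2 is a square mod q
    have h2sq : IsSquare (-2 : ZMod q) := (ZMod.exists_sq_eq_neg_two_iff hq2).mpr (Or.inr h)
    obtain ⟨c, hc⟩ := h2sq
    have hc0 : c ≠ 0 := by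
      rintro rfl
      rw [mul_zero] at hc
      have h20 : ((2 : ℕ) : ZMod q) = 0 := by
        have : (2 : ZMod q) = 0 := by linear_combination -hc
        exact_mod_cast this
      have := (ZMod.natCast_eq_zero_iff 2 q).mp h20
      have := Nat.le_of_dvd (by norm_num) this
      have := hq.two_le
      omega
    have hαeq : 2 * ((c⁻¹ : ZMod q)) ^ 2 = -1 := by
      have h2 : (2 : ZMod q) = -(c * c) := by linear_combination -hc
      rw [h2]
      field_simp
    set A : ℤ := (((c⁻¹ : ZMod q)).val : ℤ) with hA
    have hcastA : ((A : ℤ) : ZMod q) = c⁻¹ := by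
      rw [hA]; push_cast; exact ZMod.natCast_zmod_val _
    have hkey : (q : ℤ) ∣ 2 * A ^ 2 + 1 := by
      rw [← ZMod.intCast_zmod_eq_zero_iff_dvd]
      push_cast
      rw [hcastA, hαeq]
      ring
    refine ⟨(A : GaussianInt) * ⟨1, 1⟩, ?_⟩
    have hfact : ((A : GaussianInt) * ⟨1, 1⟩) ^ 2 + ι =
        ((2 * A ^ 2 + 1 : ℤ) : GaussianInt) * ⟨0, 1⟩ := by
      ext <;> simp only [pow_two, Zsqrtd.re_mul, Zsqrtd.im_mul, Zsqrtd.re_add, Zsqrtd.im_add,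
        Zsqrtd.re_intCast, Zsqrtd.im_intCast] <;> push_cast <;> ring
    rw [hfact]
    have hq1 : p ∣ ((q : ℤ) : GaussianInt) := by
      have hpq' : p ∣ ((q : ℕ) : GaussianInt) := ⟨w, hw⟩
      exact_mod_cast hpq'
    exact dvd_mul_of_dvd_left (dvd_trans hq1 (Int.cast_dvd_cast _ _ hkey)) _
  · -- q % 8 = 5 : impossible
    exfalso
    have hdvdqq : (n : ℤ) ∣ (q : ℤ) * q := ⟨w.norm, by rw [hnormq, hncast]⟩
    have hndvd : n ∣ q * q := by exact_mod_cast hdvdqq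
    have hndvd2 : n ∣ q ^ 2 := by rw [pow_two]; exact hndvd
    obtain ⟨j, hj2, hnj⟩ := (Nat.dvd_prime_pow hq).mp hndvd2
    interval_cases j
    · rw [pow_zero] at hnj; omega
    · rw [pow_one] at hnj
      have : q % 8 = 1 := by omega
      omega
    · have hnormp : p.norm = (q : ℤ) * q := by
        rw [← hncast, hnj]; push_cast; ring
      have hwnorm : w.norm = 1 := by
        rw [hnormp] at hnormq
        have hqq : (0 : ℤ) < (q : ℤ) * q := by positivity
        have := mul_left_cancel₀ (ne_of_gt hqq) (hnormq.symm.trans (mul_one ((q:ℤ)*q)).symm)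
        linarith [this]
      have hwu : IsUnit w := (Zsqrtd.norm_eq_one_iff' (by norm_num) w).mp hwnorm
      have hassoc : Associated p ((q : ℕ) : GaussianInt) := by
        rw [hw]
        exact (associated_mul_unit_left p w hwu).symm
      have hqprime : Prime ((q : ℕ) : GaussianInt) := hassoc.prime hp
      have h4 : q % 4 ≠ 3 := by omega
      obtain ⟨c, hc⟩ := ZMod.exists_sq_eq_neg_one_iff.mpr h4
      set C : ℤ := (c.val : ℤ) with hC
      have hcastC : ((C : ℤ) : ZMod q) = c := by
        rw [hC]; push_cast; exact ZMod.natCast_zmod_val _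
      have hkey : (q : ℤ) ∣ C ^ 2 + 1 := by
        rw [← ZMod.intCast_zmod_eq_zero_iff_dvd]
        push_cast
        rw [hcastC]
        linear_combination -hc
      have hfact : ((C ^ 2 + 1 : ℤ) : GaussianInt) =
          (((C : ℤ) : GaussianInt) + ι) * (((C : ℤ) : GaussianInt) - ι) := by
        ext <;> simp only [pow_two, Zsqrtd.re_mul, Zsqrtd.im_mul, Zsqrtd.re_add, Zsqrtd.im_add,
          Zsqrtd.re_sub, Zsqrtd.im_sub, Zsqrtd.re_intCast, Zsqrtd.im_intCast] <;> push_cast <;> ring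
      have hqd : ((q : ℕ) : GaussianInt) ∣
          (((C : ℤ) : GaussianInt) + ι) * (((C : ℤ) : GaussianInt) - ι) := by
        rw [← hfact]
        exact_mod_cast Int.cast_dvd_cast (α := GaussianInt) _ _ hkey
      have hq3 : 3 ≤ q := by omega
      rcases hqprime.2.2 _ _ hqd with hd | hd
      · obtain ⟨w', hw'⟩ := hd
        have him := congrArg Zsqrtd.im hw'
        simp only [Zsqrtd.im_add, Zsqrtd.im_mul, Zsqrtd.re_natCast, Zsqrtd.im_natCast,
          Zsqrtd.im_intCast] at him
        have : (q : ℤ) ∣ 1 := ⟨w'.im, by linarith [him]⟩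
        have := Int.le_of_dvd one_pos this
        have : (3 : ℤ) ≤ (q : ℤ) := by exact_mod_cast hq3
        omega
      · obtain ⟨w', hw'⟩ := hd
        have him := congrArg Zsqrtd.im hw'
        simp only [Zsqrtd.im_sub, Zsqrtd.im_mul, Zsqrtd.re_natCast, Zsqrtd.im_natCast,
          Zsqrtd.im_intCast] at him
        have : (q : ℤ) ∣ 1 := ⟨-w'.im, by linarith [him]⟩
        have := Int.le_of_dvd one_pos this
        have : (3 : ℤ) ≤ (q : ℤ) := by exact_mod_cast hq3
        omega
  · -- q % 8 = 7 : 2 is a square mod q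
    have h2sq : IsSquare (2 : ZMod q) := (ZMod.exists_sq_eq_two_iff hq2).mpr (Or.inr h)
    obtain ⟨c, hc⟩ := h2sq
    have hc0 : c ≠ 0 := by
      rintro rfl
      rw [mul_zero] at hc
      have h20 : ((2 : ℕ) : ZMod q) = 0 := by exact_mod_cast hc
      have := (ZMod.natCast_eq_zero_iff 2 q).mp h20
      have := Nat.le_of_dvd (by norm_num) this
      have := hq.two_le
      omega
    have hαeq : 2 * ((c⁻¹ : ZMod q)) ^ 2 = 1 := by
      rw [hc]; field_simp
    set A : ℤ := (((c⁻¹ : ZMod q)).val : ℤ) with hA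
    have hcastA : ((A : ℤ) : ZMod q) = c⁻¹ := by
      rw [hA]; push_cast; exact ZMod.natCast_zmod_val _
    have hkey : (q : ℤ) ∣ 2 * A ^ 2 - 1 := by
      rw [← ZMod.intCast_zmod_eq_zero_iff_dvd]
      push_cast
      rw [hcastA, hαeq]
      ring
    refine ⟨(A : GaussianInt) * ⟨1, -1⟩, ?_⟩
    have hfact : ((A : GaussianInt) * ⟨1, -1⟩) ^ 2 + ι =
        ((2 * A ^ 2 - 1 : ℤ) : GaussianInt) * ⟨0, -1⟩ := by
      ext <;> simp only [pow_two, Zsqrtd.re_mul, Zsqrtd.im_mul, Zsqrtd.re_add, Zsqrtd.im_add,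
        Zsqrtd.re_intCast, Zsqrtd.im_intCast] <;> push_cast <;> ring
    rw [hfact]
    have hq1 : p ∣ ((q : ℤ) : GaussianInt) := by
      have hpq' : p ∣ ((q : ℕ) : GaussianInt) := ⟨w, hw⟩
      exact_mod_cast hpq'
    exact dvd_mul_of_dvd_left (dvd_trans hq1 (Int.cast_dvd_cast _ _ hkey)) _

end Stmt5Aux

open Stmt5Aux

/-- Every Gaussian prime `p` with `N(p) ≡ 1 (mod 8)` is of the form `x² + i·y²`. -/
theorem stmt_5 (p : GaussianInt) (hp : Prime p) (h : p.norm ≡ 1 [ZMOD 8]) :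
    ∃ x y : GaussianInt, p = x ^ 2 + (⟨0, 1⟩ : GaussianInt) * y ^ 2 := by
  have hdvd8 : (8 : ℤ) ∣ 1 - p.norm := Int.ModEq.dvd h
  have hnn : 0 ≤ p.norm := Zsqrtd.norm_nonneg (by norm_num) p
  have hne0 : p.norm ≠ 0 := fun h0 =>
    hp.ne_zero ((Zsqrtd.norm_eq_zero_iff (by norm_num) p).mp h0)
  have hne1 : p.norm ≠ 1 := fun h1 =>
    hp.not_unit ((Zsqrtd.norm_eq_one_iff' (by norm_num) p).mp h1)
  have h8 : p.norm % 8 = 1 := by omega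
  have h9 : 9 ≤ p.norm := by omega
  obtain ⟨z, hz⟩ := exists_sq p hp h9 h8
  obtain ⟨z', hz'd, hz'n⟩ := gauss_round z p hp.ne_zero
  have hdvd : p ∣ z' ^ 2 + ι := by
    have hrepr : z' ^ 2 + ι = (z ^ 2 + ι) - (z ^ 2 - z' ^ 2) := by ring
    rw [hrepr]
    refine dvd_sub hz ?_
    obtain ⟨u, hu⟩ := hz'd
    exact ⟨u * (z + z'), by linear_combination (z + z') * hu⟩
  obtain ⟨m₀, hm₀⟩ := hdvd
  have hm₀' : p * m₀ = z' ^ 2 + ι * 1 ^ 2 := by rw [← hm₀]; ring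
  have hm00 : m₀ ≠ 0 := by
    rintro rfl
    rw [mul_zero] at hm₀
    have him := congrArg Zsqrtd.im hm₀
    rw [show z' ^ 2 + ι = z' ^ 2 + ι * 1 ^ 2 by ring, F_im] at him
    simp only [Zsqrtd.re_one, Zsqrtd.im_one, Zsqrtd.im_zero] at him
    omega
  have hFnorm : (z' ^ 2 + ι * 1 ^ 2).norm =
      (z'.re ^ 2 - z'.im ^ 2) ^ 2 + (2 * (z'.re * z'.im) + 1) ^ 2 := by
    rw [norm_comp, F_re, F_im]
    simp only [Zsqrtd.re_one, Zsqrtd.im_one]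
    ring
  have hnormeq : p.norm * m₀.norm = (z' ^ 2 + ι * 1 ^ 2).norm := by
    rw [← Zsqrtd.norm_mul, hm₀']
  have hs : 2 * (z'.re ^ 2 + z'.im ^ 2) ≤ p.norm := by rw [norm_comp] at hz'n; linarith
  have h4 : 4 * ((z'.re ^ 2 - z'.im ^ 2) ^ 2 + (2 * (z'.re * z'.im) + 1) ^ 2)
      ≤ (p.norm + 2) ^ 2 := by
    nlinarith [sq_nonneg (z'.re - z'.im),
      mul_nonneg (by linarith : (0:ℤ) ≤ p.norm - 2 * (z'.re ^ 2 + z'.im ^ 2))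
        (by positivity : (0:ℤ) ≤ p.norm + 2 * (z'.re ^ 2 + z'.im ^ 2) + 4)]
  have hlt : m₀.norm < p.norm := by
    have h1 : 4 * (p.norm * m₀.norm) < p.norm * (4 * p.norm) := by
      rw [hnormeq, hFnorm]
      nlinarith [h4, h9]
    have h2 : p.norm * m₀.norm < p.norm * p.norm := by nlinarith [h1]
    exact lt_of_mul_lt_mul_left h2 hnn
  exact descent p hp m₀.norm.natAbs m₀ z' 1 rfl hm00 hlt hm₀'
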